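/- Let α < β be real numbers, let g : [α,β] → ℝ be continuous with ρ := g(β) − g(α) > 0, let γ ∈ [α,β] satisfy F(α) ≥ F(γ), and let ρ₁ > 0. Then ∫_α^γ ( g(α) − ρ₁ − g(x) )² dx − ∫_α^γ ( g(α) − g(x) )² dx ≤ ρ₁·(ρ₁ + ρ)·(γ − α). -/
import Mathlib


/-- Under the hypothesis `F(α) ≥ F(γ)` on the coincidence of the step function,
shifting the left value down by `ρ₁ > 0` increases the fidelity on `(α,γ)` by at
most `ρ₁(ρ₁+ρ)(γ-α)`, where `ρ = g(β) - g(α) > 0`. -/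
theorem fidelity_shift_bound (α β : ℝ) (hαβ : α < β) (g : ℝ → ℝ)
    (hg : ContinuousOn g (Set.Icc α β)) (ρ : ℝ) (hρdef : ρ = g β - g α) (hρpos : 0 < ρ)
    (γ : ℝ) (hγ : γ ∈ Set.Icc α β)
    (hF : (∫ x in α..γ, (g α - g x) ^ 2) + (∫ x in γ..β, (g β - g x) ^ 2)
        ≤ ∫ x in α..β, (g β - g x) ^ 2)
    (ρ₁ : ℝ) (hρ₁ : 0 < ρ₁) :
    (∫ x in α..γ, (g α - ρ₁ - g x) ^ 2) - (∫ x in α..γ, (g α - g x) ^ 2)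
      ≤ ρ₁ * (ρ₁ + ρ) * (γ - α) := by
  obtain ⟨hαγ, hγβ⟩ := hγ
  have hu1 : Set.uIcc α γ = Set.Icc α γ := Set.uIcc_of_le hαγ
  have hu2 : Set.uIcc γ β = Set.Icc γ β := Set.uIcc_of_le hγβ
  have hg1 : ContinuousOn g (Set.uIcc α γ) := by
    rw [hu1]; exact hg.mono (Set.Icc_subset_Icc le_rfl hγβ)
  have hg2 : ContinuousOn g (Set.uIcc γ β) := by
    rw [hu2]; exact hg.mono (Set.Icc_subset_Icc hαγ le_rfl)
  have hIg : IntervalIntegrable g MeasureTheory.volume α γ := hg1.intervalIntegrable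
  have hIsq : ∀ c : ℝ, IntervalIntegrable (fun x => (c - g x) ^ 2) MeasureTheory.volume α γ :=
    fun c => ((continuousOn_const.sub hg1).pow 2).intervalIntegrable
  have hIsq2 : IntervalIntegrable (fun x => (g β - g x) ^ 2) MeasureTheory.volume γ β :=
    ((continuousOn_const.sub hg2).pow 2).intervalIntegrable
  set I : ℝ := ∫ x in α..γ, g x with hI
  -- split the full integral
  have hsplit : (∫ x in α..γ, (g β - g x) ^ 2) + (∫ x in γ..β, (g β - g x) ^ 2)
      = ∫ x in α..β, (g β - g x) ^ 2 :=
    intervalIntegral.integral_add_adjacent_intervals (hIsq (g β)) hIsq2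
  have hkey : (∫ x in α..γ, (g α - g x) ^ 2) ≤ ∫ x in α..γ, (g β - g x) ^ 2 := by
    linarith
  -- compute the difference of squares integrals in terms of I
  have hB : (∫ x in α..γ, (g β - g x) ^ 2) - (∫ x in α..γ, (g α - g x) ^ 2)
      = ((g β) ^ 2 - (g α) ^ 2) * (γ - α) - 2 * ρ * I := by
    rw [← intervalIntegral.integral_sub (hIsq (g β)) (hIsq (g α))]
    have : ∀ x : ℝ, (g β - g x) ^ 2 - (g α - g x) ^ 2
        = ((g β) ^ 2 - (g α) ^ 2) + (-(2 * ρ)) * g x := by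
      intro x; rw [hρdef]; ring
    simp_rw [this]
    rw [intervalIntegral.integral_add intervalIntegrable_const (hIg.const_mul _),
      intervalIntegral.integral_const_mul, intervalIntegral.integral_const]
    simp [hI]; ring
  have h2I : 2 * ρ * I ≤ ((g β) ^ 2 - (g α) ^ 2) * (γ - α) := by linarith
  -- bound on I, dividing by ρ > 0
  have hIbound : 2 * I ≤ (g α + g β) * (γ - α) := by
    have h : ρ * (2 * I) ≤ ρ * ((g α + g β) * (γ - α)) := by
      rw [hρdef] at h2I ⊢; nlinarith [h2I]
    exact le_of_mul_le_mul_left h hρpos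
  -- compute the LHS
  have hA : (∫ x in α..γ, (g α - ρ₁ - g x) ^ 2) - (∫ x in α..γ, (g α - g x) ^ 2)
      = (ρ₁ ^ 2 - 2 * ρ₁ * g α) * (γ - α) + 2 * ρ₁ * I := by
    rw [← intervalIntegral.integral_sub (by
      have : (fun x => (g α - ρ₁ - g x) ^ 2) = fun x => ((g α - ρ₁) - g x) ^ 2 := rfl
      rw [this]; exact hIsq (g α - ρ₁)) (hIsq (g α))]
    have : ∀ x : ℝ, (g α - ρ₁ - g x) ^ 2 - (g α - g x) ^ 2
        = (ρ₁ ^ 2 - 2 * ρ₁ * g α) + (2 * ρ₁) * g x := by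
      intro x; ring
    simp_rw [this]
    rw [intervalIntegral.integral_add intervalIntegrable_const (hIg.const_mul _),
      intervalIntegral.integral_const_mul, intervalIntegral.integral_const]
    simp [hI]; ring
  rw [hA, hρdef]
  nlinarith [mul_le_mul_of_nonneg_left hIbound hρ₁.le]
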